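/- For every N ≥ 3, the Boolean function Bav_N^0 : F_2^N → F_2 is balanced: the number of v ∈ F_2^N with Bav_N^0(v) = 1 equals 2^{N−1} (and hence so does the number of v with Bav_N^0(v) = 0). -/

import Mathlib

namespace Rhythm

/-- `a +_N b`, addition on `Z_N = {0,…,N−1}`. -/
def addN (N a b : ℕ) : ℕ := (a + b) % N

/-- `a −_N b`, subtraction on `Z_N = {0,…,N−1}`. -/
def subN (N a b : ℕ) : ℕ := (a + N - b) % N

/-- The discrete average `av(a,b) = a +_N ⌊(b −_N a)/2⌋`. -/
def av (N a b : ℕ) : ℕ := addN N a (subN N b a / 2)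

/-- The cyclic interval `[a,b]_{Z_N}`. -/
def cyclicIcc (N a b : ℕ) : Finset ℕ :=
  if a ≤ b then Finset.Icc a b else Finset.Icc a (N - 1) ∪ Finset.Icc 0 b

/-- The half-open cyclic interval `[a,b)_{Z_N} = [a,b]_{Z_N} \ {b}`. -/
def cyclicIco (N a b : ℕ) : Finset ℕ := (cyclicIcc N a b).erase b

/-- The half-open cyclic interval `(a,b]_{Z_N} = [a,b]_{Z_N} \ {a}`. -/
def cyclicIoc (N a b : ℕ) : Finset ℕ := (cyclicIcc N a b).erase a

/-- Cyclic successor `⟨i+1⟩_n` on `Fin n`. -/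
def csucc {n : ℕ} (i : Fin n) : Fin n := ⟨(i.val + 1) % n, Nat.mod_lt _ i.pos⟩

/-- Cyclic predecessor `⟨i−1⟩_n` on `Fin n`. -/
def cpred {n : ℕ} (i : Fin n) : Fin n := ⟨(i.val + (n - 1)) % n, Nat.mod_lt _ i.pos⟩

/-- `a ∈ R_N^n`: entries in `Z_N`, pairwise distinct, and `Σ_i (a_{⟨i+1⟩_n} −_N a_i) = N`. -/
def IsRhythm (N : ℕ) {n : ℕ} (a : Fin n → ℕ) : Prop :=
  (∀ i, a i < N) ∧ Function.Injective a ∧ (∑ i, subN N (a (csucc i)) (a i)) = N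

/-- The discrete average transformation `Rav`. -/
def Rav (N : ℕ) {n : ℕ} (a : Fin n → ℕ) : Fin n → ℕ := fun i => av N (a i) (a (csucc i))

/-- The rotation `rot(a_0,…,a_{n−1}) = (a_{n−1},a_0,…,a_{n−2})`. -/
def rot {n : ℕ} (a : Fin n → ℕ) : Fin n → ℕ := fun i => a (cpred i)

/-- The translation `tr(a_0,…,a_{n−1}) = (a_0 +_N 1,…,a_{n−1} +_N 1)`. -/
def tr (N : ℕ) {n : ℕ} (a : Fin n → ℕ) : Fin n → ℕ := fun i => addN N (a i) 1

/-- `j` is the jumping number of `a`: `a_{⟨j−1⟩_n} > a_j` and `a_{⟨k−1⟩_n} < a_k` for `k ≠ j`. -/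
def IsJump {n : ℕ} (a : Fin n → ℕ) (j : Fin n) : Prop :=
  a (cpred j) > a j ∧ ∀ k, k ≠ j → a (cpred k) < a k

/-- The map `Iav`: for `n ≥ 2` it is `Rav` if `a` is proper (`N − a_{n−1} > a_0`) and
`rot ∘ Rav` otherwise; for `n ≤ 1` it is the identity. -/
def Iav (N : ℕ) {n : ℕ} (a : Fin n → ℕ) : Fin n → ℕ :=
  if h : 2 ≤ n then
    if N - a ⟨n - 1, by omega⟩ > a ⟨0, by omega⟩ then Rav N a else rot (Rav N a)
  else a

/-- The support of a Boolean vector `v ∈ F_2^N`. -/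
def supp (N : ℕ) (v : Fin N → ZMod 2) : Finset (Fin N) :=
  Finset.univ.filter fun i => v i = 1

/-- `BtoI(v)`: the increasing enumeration of the support of `v`. -/
def BtoI (N : ℕ) (v : Fin N → ZMod 2) : Fin (supp N v).card → ℕ :=
  fun i => (((supp N v).orderIsoOfFin rfl) i).1.val

/-- `ItoB(b)`: the characteristic vector of the set of entries of the tuple `b`. -/
def ItoB (N : ℕ) {n : ℕ} (b : Fin n → ℕ) : Fin N → ZMod 2 :=
  fun i => if ∃ k, b k = i.val then 1 else 0

/-- The Boolean average `Bav = ItoB ∘ Iav ∘ BtoI : B_N → B_N`. -/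
def Bav (N : ℕ) (v : Fin N → ZMod 2) : Fin N → ZMod 2 :=
  ItoB N (Iav N (BtoI N v))

/-- The cyclic shift `Btr(v_0,…,v_{N−1}) = (v_{N−1},v_0,…,v_{N−2})`. -/
def Btr (N : ℕ) (v : Fin N → ZMod 2) : Fin N → ZMod 2 := fun i => v (cpred i)

/-- `Par_N`: the set of parental pairs of zero, i.e. pairs `(a,b) ∈ Z_N × Z_N` with `av(a,b) = 0`. -/
def Par (N : ℕ) : Finset (ℕ × ℕ) :=
  (Finset.range N ×ˢ Finset.range N).filter fun p => av N p.1 p.2 = 0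

/-- The least absolute remainder `φ_N(i) ∈ Z_{N,±}` of `i ∈ Z_N`. -/
def toSigned (N : ℕ) (i : Fin N) : ℤ :=
  if (i : ℕ) ≤ N / 2 then (i : ℤ) else (i : ℤ) - N

/-- `G_N(y) = Bav_N^0(v)` where `v_{⟨j⟩_N} = 1 + y_j` for `j ∈ Z_{N,±}`. -/
def G (N : ℕ) (y : ℤ → ZMod 2) : ZMod 2 :=
  if h : 0 < N then Bav N (fun i => 1 + y (toSigned N i)) ⟨0, h⟩ else 0

end Rhythm

namespace RhythmAux
open Rhythm Finset

open Finset

lemma zmod2_cases : ∀ a : ZMod 2, a = 0 ∨ a = 1 := by decide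

lemma zmod2_ne_one : ∀ a : ZMod 2, (a ≠ 1 ↔ a = 0) := by decide

lemma sum_range_two_pow (n : ℕ) : ∑ k ∈ Finset.range n, 2 ^ k = 2 ^ n - 1 := by
  induction n with
  | zero => simp
  | succ n ih =>
    rw [Finset.sum_range_succ, ih, pow_succ]
    have : 1 ≤ 2 ^ n := Nat.one_le_two_pow
    omega

lemma card_pattern (N : ℕ) (K : Finset (Fin N)) (g : Fin N → ZMod 2) :
    (univ.filter fun v : Fin N → ZMod 2 => ∀ i ∈ K, v i = g i).card = 2 ^ (N - K.card) := by
  classical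
  have e : {v : Fin N → ZMod 2 // ∀ i ∈ K, v i = g i} ≃ ({i : Fin N // i ∉ K} → ZMod 2) :=
    { toFun := fun v i => v.1 i.1
      invFun := fun w => ⟨fun i => if h : i ∈ K then g i else w ⟨i, h⟩, fun i hi => dif_pos hi⟩
      left_inv := fun v => Subtype.ext (funext fun i => by
        dsimp only
        split_ifs with h
        · exact (v.2 i h).symm
        · rfl)
      right_inv := fun w => funext fun i => by
        dsimp only
        rw [dif_neg i.2] }
  have h1 : (univ.filter fun v : Fin N → ZMod 2 => ∀ i ∈ K, v i = g i).card
      = Fintype.card {v : Fin N → ZMod 2 // ∀ i ∈ K, v i = g i} :=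
    (Fintype.card_subtype _).symm
  rw [h1, Fintype.card_congr e, Fintype.card_fun,
    show Fintype.card (ZMod 2) = 2 from rfl,
    Fintype.card_subtype_compl, Fintype.card_coe, Fintype.card_fin]


open Rhythm

lemma av_lt {N x y : ℕ} (hxy : x < y) (hy : y < N) : av N x y = x + (y - x) / 2 := by
  have h0 : (y + N - x) % N = y - x := by
    rw [show y + N - x = (y - x) + N by omega, Nat.add_mod_right]
    exact Nat.mod_eq_of_lt (by omega)
  simp only [av, addN, subN, h0]
  exact Nat.mod_eq_of_lt (by omega)

lemma av_gt_eq_zero {N x y : ℕ} (hyx : y < x) (hx : x < N) :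
    av N x y = 0 ↔ x + (y + N - x) / 2 = N := by
  have h0 : (y + N - x) % N = y + N - x := Nat.mod_eq_of_lt (by omega)
  simp only [av, addN, subN, h0]
  rcases Nat.lt_or_ge (x + (y + N - x) / 2) N with h | h
  · rw [Nat.mod_eq_of_lt h]
    omega
  · rw [Nat.mod_eq_sub_mod h, Nat.mod_eq_of_lt (by omega)]
    omega

lemma cpred_csucc {n : ℕ} (i : Fin n) : cpred (csucc i) = i := by
  apply Fin.ext
  show ((i.val + 1) % n + (n - 1)) % n = i.val
  have hn : 0 < n := i.pos
  have hi := i.isLt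
  rcases Nat.lt_or_ge (i.val + 1) n with h | h
  · rw [Nat.mod_eq_of_lt h, show i.val + 1 + (n - 1) = i.val + n by omega,
      Nat.add_mod_right, Nat.mod_eq_of_lt hi]
  · rw [show i.val + 1 = n by omega, Nat.mod_self, Nat.zero_add,
      Nat.mod_eq_of_lt (by omega)]
    omega

lemma exists_Iav_iff (N n : ℕ) (hN : 3 ≤ N) (hn : 2 ≤ n) (a : Fin n → ℕ)
    (hlt : ∀ i, a i < N) (hmono : StrictMono a) :
    (∃ i, Iav N a i = 0) ↔
      ((a ⟨0, by omega⟩ = 0 ∧ a ⟨1, by omega⟩ = 1) ∨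
       (1 ≤ a ⟨0, by omega⟩ ∧
         a ⟨n - 1, by omega⟩ + (a ⟨0, by omega⟩ + N - a ⟨n - 1, by omega⟩) / 2 = N)) := by
  set i0 : Fin n := ⟨0, by omega⟩ with hi0
  set i1 : Fin n := ⟨1, by omega⟩ with hi1
  set il : Fin n := ⟨n - 1, by omega⟩ with hil
  have hsucc0 : csucc i0 = i1 := by
    apply Fin.ext
    show (0 + 1) % n = 1
    rw [Nat.zero_add, Nat.mod_eq_of_lt (by omega)]
  have hsuccl : csucc il = i0 := by
    apply Fin.ext
    show (n - 1 + 1) % n = 0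
    rw [show n - 1 + 1 = n by omega, Nat.mod_self]
  have h0l : a i0 < a il := hmono (by simp [hi0, hil, Fin.lt_def]; omega)
  -- reduce Iav to Rav
  have hIR : (∃ i, Iav N a i = 0) ↔ ∃ i, Rav N a i = 0 := by
    have hd : Iav N a = if N - a ⟨n - 1, by omega⟩ > a ⟨0, by omega⟩
        then Rav N a else rot (Rav N a) := dif_pos hn
    rw [hd]
    split_ifs with hp
    · rfl
    · constructor
      · rintro ⟨i, hi⟩
        exact ⟨cpred i, hi⟩
      · rintro ⟨i, hi⟩
        refine ⟨csucc i, ?_⟩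
        show Rav N a (cpred (csucc i)) = 0
        rw [cpred_csucc]
        exact hi
  rw [hIR]
  constructor
  · rintro ⟨i, hi⟩
    have hi' : av N (a i) (a (csucc i)) = 0 := hi
    rcases Nat.lt_or_ge i.val (n - 1) with hc | hc
    · -- non-wrap arc
      have hcs : (csucc i).val = i.val + 1 := Nat.mod_eq_of_lt (by omega)
      have hlt2 : a i < a (csucc i) := hmono (by rw [Fin.lt_def, hcs]; omega)
      rw [av_lt hlt2 (hlt _)] at hi'
      have hai : a i = 0 := by omega
      have hii0 : i = i0 := by
        by_contra hne
        have : i0 < i := by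
          rw [Fin.lt_def]
          simp only [hi0]
          rcases Nat.eq_or_lt_of_le (Nat.zero_le i.val) with h | h
          · exact absurd (Fin.ext h.symm) hne
          · exact h
        have := hmono this
        omega
      left
      have h1 : a (csucc i) ≤ 1 := by omega
      have h2 : a i0 < a i1 := hmono (by rw [Fin.lt_def]; simp [hi0, hi1])
      rw [hii0, hsucc0] at hi' h1
      constructor
      · omega
      · omega
    · -- wrap arc
      have hic : i = il := Fin.ext (by have := i.isLt; simp [hil]; omega)
      rw [hic, hsuccl] at hi'
      rw [av_gt_eq_zero h0l (hlt il)] at hi'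
      right
      have h1 := hlt il
      constructor
      · omega
      · exact hi'
  · rintro (⟨h1, h2⟩ | ⟨h1, h2⟩)
    · refine ⟨i0, ?_⟩
      show av N (a i0) (a (csucc i0)) = 0
      rw [hsucc0, h1, h2, av_lt (by omega) (by omega)]
    · refine ⟨il, ?_⟩
      show av N (a il) (a (csucc il)) = 0
      rw [hsuccl, av_gt_eq_zero h0l (hlt il)]
      exact h2


open Rhythm Finset

lemma bav_char (N : ℕ) (hN : 3 ≤ N) (v : Fin N → ZMod 2) :
    Bav N v ⟨0, Nat.zero_lt_of_lt hN⟩ = 1 ↔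
      ((∀ i : Fin N, i.val ≤ 1 → v i = 1) ∨
       (∀ i : Fin N, v i = if i.val = 0 then 1 else 0) ∨
       (∃ s t : ℕ, 1 ≤ s ∧ s ≤ t ∧ t ≤ s + 1 ∧ s + t + 1 ≤ N ∧
         (∀ i : Fin N, i.val = t ∨ i.val = N - s → v i = 1) ∧
         (∀ i : Fin N, i.val < t ∨ N - s < i.val → v i = 0))) := by
  classical
  have hmem : ∀ j : Fin N, v j = 1 ↔ j ∈ supp N v := by
    intro j; simp [supp]
  have hlt : ∀ i : Fin (supp N v).card, BtoI N v i < N :=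
    fun i => (((supp N v).orderIsoOfFin rfl) i).1.isLt
  have hmono : StrictMono (BtoI N v) := by
    intro i j hij
    have h := ((supp N v).orderIsoOfFin rfl).strictMono hij
    have h2 : (((supp N v).orderIsoOfFin rfl) i).1 < (((supp N v).orderIsoOfFin rfl) j).1 :=
      h
    exact h2
  have hmem1 : ∀ i : Fin (supp N v).card, v ⟨BtoI N v i, hlt i⟩ = 1 := by
    intro i
    have h2 := (((supp N v).orderIsoOfFin rfl) i).2
    have h3 : (⟨BtoI N v i, hlt i⟩ : Fin N) = (((supp N v).orderIsoOfFin rfl) i).1 :=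
      Fin.ext rfl
    rw [h3, hmem]
    exact h2
  have hsurj : ∀ j : Fin N, v j = 1 → ∃ i : Fin (supp N v).card, BtoI N v i = j.val := by
    intro j hj
    refine ⟨((supp N v).orderIsoOfFin rfl).symm ⟨j, (hmem j).1 hj⟩, ?_⟩
    show ((((supp N v).orderIsoOfFin rfl)
      (((supp N v).orderIsoOfFin rfl).symm ⟨j, (hmem j).1 hj⟩)).1).val = j.val
    rw [OrderIso.apply_symm_apply]
  have hzero : ∀ j : Fin N, v j ≠ 1 → v j = 0 := by
    intro j hj
    rcases zmod2_cases (v j) with h | h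
    · exact h
    · exact absurd h hj
  have hbav : (Bav N v ⟨0, Nat.zero_lt_of_lt hN⟩ = 1) ↔ ∃ i : Fin (supp N v).card, Iav N (BtoI N v) i = 0 := by
    have hb : Bav N v ⟨0, Nat.zero_lt_of_lt hN⟩
        = if ∃ i : Fin (supp N v).card, Iav N (BtoI N v) i = 0 then 1 else 0 := rfl
    rw [hb]
    split_ifs with h
    · simp [h]
    · simp only [iff_false, h]
      exact fun hc => absurd hc.symm one_ne_zero
  rw [hbav]
  rcases Nat.lt_or_ge (supp N v).card 2 with hn2 | hn2
  · -- small support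
    have hIa : Iav N (BtoI N v) = BtoI N v := dif_neg (by omega)
    rw [hIa]
    rcases Nat.eq_or_lt_of_le (Nat.zero_le (supp N v).card) with hc0 | hc1
    · -- card = 0 : both sides false
      have hfalse : ∀ j : Fin N, v j = 0 := by
        intro j
        apply hzero
        intro hj
        rcases hsurj j hj with ⟨i, _⟩
        exact absurd i.isLt (by omega)
      constructor
      · rintro ⟨i, _⟩
        exact absurd i.isLt (by omega)
      · rintro (h | h | ⟨s, t, hs, hst, hts, hstN, h1, _⟩)
        · have := h ⟨0, by omega⟩ (by simp)
          rw [hfalse] at this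
          exact absurd this.symm one_ne_zero
        · have := h ⟨0, by omega⟩
          rw [hfalse] at this
          simp at this
        · have := h1 ⟨t, by omega⟩ (Or.inl rfl)
          rw [hfalse] at this
          exact absurd this.symm one_ne_zero
    · -- card = 1
      have hc1' : (supp N v).card = 1 := by omega
      have huniq : ∀ i j : Fin (supp N v).card, i = j := by
        intro i j
        apply Fin.ext
        have := i.isLt
        have := j.isLt
        omega
      have honev : ∀ j j' : Fin N, v j = 1 → v j' = 1 → j = j' := by
        intro j j' hj hj'
        rcases hsurj j hj with ⟨i, hi⟩
        rcases hsurj j' hj' with ⟨i', hi'⟩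
        rw [huniq i i'] at hi
        exact Fin.ext (by omega)
      set i0 : Fin (supp N v).card := ⟨0, by omega⟩ with hi0d
      constructor
      · rintro ⟨i, hi⟩
        right; left
        intro j
        rw [huniq i i0] at hi
        split_ifs with hj
        · have : j = ⟨BtoI N v i0, hlt i0⟩ := Fin.ext (by simp only [Fin.val_mk]; omega)
          rw [this]
          exact hmem1 i0
        · apply hzero
          intro hj1
          rcases hsurj j hj1 with ⟨k, hk⟩
          rw [huniq k i0] at hk
          omega
      · rintro (h | h | ⟨s, t, hs, hst, hts, hstN, h1, _⟩)
        · -- v 0 = v 1 = 1 : impossible with card 1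
          have e01 : (⟨0, by omega⟩ : Fin N) = ⟨1, by omega⟩ :=
            honev _ _ (h ⟨0, by omega⟩ (by simp)) (h ⟨1, by omega⟩ (by simp))
          have := Fin.mk.injEq (n := N) 0 (by omega) 1 (by omega) ▸ e01
          simp at e01
        · refine ⟨i0, ?_⟩
          have h1 := hmem1 i0
          have h2 := h ⟨BtoI N v i0, hlt i0⟩
          rw [h1] at h2
          by_contra hne
          rw [if_neg (by simpa using hne)] at h2
          exact absurd h2 one_ne_zero
        · have e01 : (⟨t, by omega⟩ : Fin N) = ⟨N - s, by omega⟩ :=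
            honev _ _ (h1 ⟨t, by omega⟩ (Or.inl rfl)) (h1 ⟨N - s, by omega⟩ (Or.inr rfl))
          simp at e01
          omega
  · -- card ≥ 2
    set n := (supp N v).card with hnd
    set a := BtoI N v with had
    set i0 : Fin n := ⟨0, by omega⟩ with hi0d
    set i1 : Fin n := ⟨1, by omega⟩ with hi1d
    set il : Fin n := ⟨n - 1, by omega⟩ with hild
    rw [exists_Iav_iff N n hN hn2 a hlt hmono,
      show ((a ⟨0, by omega⟩ = 0 ∧ a ⟨1, by omega⟩ = 1) ∨
        (1 ≤ a ⟨0, by omega⟩ ∧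
          a ⟨n - 1, by omega⟩ + (a ⟨0, by omega⟩ + N - a ⟨n - 1, by omega⟩) / 2 = N)) =
       ((a i0 = 0 ∧ a i1 = 1) ∨
        (1 ≤ a i0 ∧ a il + (a i0 + N - a il) / 2 = N)) from rfl]
    have h01 : a i0 < a i1 := hmono (by rw [Fin.lt_def]; simp only [Fin.val_mk, hi0d, hi1d]; omega)
    have h0l : a i0 ≤ a il := hmono.monotone (by rw [Fin.le_def]; simp only [Fin.val_mk, hi0d, hild]; omega)
    have hmin : ∀ i : Fin n, a i0 ≤ a i :=
      fun i => hmono.monotone (by rw [Fin.le_def]; simp only [Fin.val_mk, hi0d]; omega)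
    have hmax : ∀ i : Fin n, a i ≤ a il := by
      intro i
      apply hmono.monotone
      rw [Fin.le_def]
      have := i.isLt
      simp only [Fin.val_mk, hild]
      omega
    constructor
    · rintro (⟨h1, h2⟩ | ⟨h1, h2⟩)
      · left
        intro i hi
        rcases Nat.eq_or_lt_of_le hi with h | h
        · have : i = ⟨a i1, hlt i1⟩ := Fin.ext (by simp only [Fin.val_mk]; omega)
          rw [this]; exact hmem1 i1
        · have : i = ⟨a i0, hlt i0⟩ := Fin.ext (by simp only [Fin.val_mk]; omega)
          rw [this]; exact hmem1 i0
      · right; right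
        refine ⟨N - a il, a i0, by have := hlt il; omega, ?_, ?_, ?_, ?_, ?_⟩
        · -- s ≤ t
          have hln : a il < N := hlt il
          have h0ln : a i0 < a il := hmono (by rw [Fin.lt_def]; simp only [Fin.val_mk, hi0d, hild]; omega)
          omega
        · have hln : a il < N := hlt il
          omega
        · have h0ln : a i0 < a il := hmono (by rw [Fin.lt_def]; simp only [Fin.val_mk, hi0d, hild]; omega)
          have hln : a il < N := hlt il
          omega
        · intro i hi
          have hln : a il < N := hlt il
          rcases hi with h | h
          · have : i = ⟨a i0, hlt i0⟩ := Fin.ext (by simp only [Fin.val_mk]; omega)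
            rw [this]; exact hmem1 i0
          · have : i = ⟨a il, hlt il⟩ := Fin.ext (by simp only [Fin.val_mk]; omega)
            rw [this]; exact hmem1 il
        · intro i hi
          apply hzero
          intro hi1
          rcases hsurj i hi1 with ⟨k, hk⟩
          have hk1 := hmin k
          have hk2 := hmax k
          have hln : a il < N := hlt il
          omega
    · rintro (h | h | ⟨s, t, hs, hst, hts, hstN, hone, hzer⟩)
      · -- v 0 = 1 and v 1 = 1
        left
        rcases hsurj ⟨0, by omega⟩ (h _ (by simp)) with ⟨k, hk⟩
        rcases hsurj ⟨1, by omega⟩ (h _ (by simp)) with ⟨k', hk'⟩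
        simp only at hk hk'
        have ha0 : a i0 = 0 := by have := hmin k; omega
        refine ⟨ha0, ?_⟩
        have hkk : i0 < k' := by
          rw [Fin.lt_def]
          simp only [hi0d]
          rcases Nat.eq_or_lt_of_le (Nat.zero_le k'.val) with hh | hh
          · exfalso
            have : k' = i0 := Fin.ext (by rw [hi0d]; exact hh.symm)
            rw [this] at hk'
            omega
          · exact hh
        have h1k : a i1 ≤ a k' := hmono.monotone (by rw [Fin.le_def]; simp only [Fin.val_mk, hi1d]; omega)
        omega
      · -- v = e_0 : impossible with card ≥ 2
        exfalso
        have hv1 := hmem1 i1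
        have := h ⟨a i1, hlt i1⟩
        rw [hv1, if_neg (by simp; omega)] at this
        exact absurd this one_ne_zero
      · -- wrap pattern
        right
        have hone_t := hone ⟨t, by omega⟩ (Or.inl rfl)
        have hone_p := hone ⟨N - s, by omega⟩ (Or.inr rfl)
        rcases hsurj _ hone_t with ⟨k, hk⟩
        rcases hsurj _ hone_p with ⟨k', hk'⟩
        simp only at hk hk'
        have hb0 : ¬ (a i0 < t ∨ N - s < a i0) := by
          intro hcon
          have := hzer ⟨a i0, hlt i0⟩ hcon
          rw [hmem1 i0] at this
          exact absurd this one_ne_zero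
        have hbl : ¬ (a il < t ∨ N - s < a il) := by
          intro hcon
          have := hzer ⟨a il, hlt il⟩ hcon
          rw [hmem1 il] at this
          exact absurd this one_ne_zero
        have ha0 : a i0 = t := by have := hmin k; omega
        have hal : a il = N - s := by have := hmax k'; omega
        refine ⟨by omega, ?_⟩
        rw [ha0, hal]
        have h2 : (t + s) / 2 = s := by omega
        rw [show t + N - (N - s) = t + s by omega, h2]
        omega


open Rhythm Finset

lemma card_Q0 (N : ℕ) (hN : 3 ≤ N) :
    (univ.filter fun v : Fin N → ZMod 2 => ∀ i : Fin N, i.val ≤ 1 → v i = 1).card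
      = 2 ^ (N - 2) := by
  classical
  have hflt : (univ.filter fun v : Fin N → ZMod 2 => ∀ i : Fin N, i.val ≤ 1 → v i = 1)
      = univ.filter fun v : Fin N → ZMod 2 =>
          ∀ i ∈ (univ.filter fun i : Fin N => i.val ≤ 1), v i = (fun _ => (1 : ZMod 2)) i := by
    apply filter_congr
    intro v _
    simp
  rw [hflt, card_pattern]
  congr 1
  have hK : (univ.filter fun i : Fin N => i.val ≤ 1) = Iic (⟨1, by omega⟩ : Fin N) := by
    ext i
    simp [Fin.le_def]
  rw [hK, Fin.card_Iic]

lemma card_Q1 (N : ℕ) (hN : 3 ≤ N) :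
    (univ.filter fun v : Fin N → ZMod 2 =>
      ∀ i : Fin N, v i = if i.val = 0 then 1 else 0).card = 1 := by
  classical
  have hflt : (univ.filter fun v : Fin N → ZMod 2 => ∀ i : Fin N, v i = if i.val = 0 then 1 else 0)
      = univ.filter fun v : Fin N → ZMod 2 =>
          ∀ i ∈ (univ : Finset (Fin N)), v i = (fun i : Fin N => if i.val = 0 then 1 else 0) i := by
    apply filter_congr
    intro v _
    simp
  rw [hflt, card_pattern, card_univ, Fintype.card_fin, Nat.sub_self, pow_zero]

lemma card_Qst (N s t : ℕ) (h1 : 1 ≤ s) (h2 : s ≤ t) (h3 : s + t + 1 ≤ N) :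
    (univ.filter fun v : Fin N → ZMod 2 =>
      (∀ i : Fin N, i.val = t ∨ i.val = N - s → v i = 1) ∧
      (∀ i : Fin N, i.val < t ∨ N - s < i.val → v i = 0)).card = 2 ^ (N - (s + t + 1)) := by
  classical
  set K : Finset (Fin N) := univ.filter fun i : Fin N => i.val ≤ t ∨ N - s ≤ i.val with hKd
  set g : Fin N → ZMod 2 := fun i => if i.val = t ∨ i.val = N - s then 1 else 0 with hgd
  have htNs : t < N - s := by omega
  have hflt : (univ.filter fun v : Fin N → ZMod 2 =>
      (∀ i : Fin N, i.val = t ∨ i.val = N - s → v i = 1) ∧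
      (∀ i : Fin N, i.val < t ∨ N - s < i.val → v i = 0))
      = univ.filter fun v : Fin N → ZMod 2 => ∀ i ∈ K, v i = g i := by
    apply filter_congr
    intro v _
    simp only [hKd, hgd, mem_filter, mem_univ, true_and]
    constructor
    · rintro ⟨hone, hzer⟩ i hi
      by_cases hc : i.val = t ∨ i.val = N - s
      · rw [if_pos hc]
        exact hone i hc
      · rw [if_neg hc]
        push_neg at hc
        exact hzer i (by omega)
    · intro h
      constructor
      · intro i hi
        have := h i (by omega)
        rwa [if_pos hi] at this
      · intro i hi
        have := h i (by omega)
        rwa [if_neg (by omega)] at this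
  rw [hflt, card_pattern]
  congr 1
  have hK : K = Iic (⟨t, by omega⟩ : Fin N) ∪ Ici (⟨N - s, by omega⟩ : Fin N) := by
    ext i
    simp [hKd, Fin.le_def]
  have hdisj : Disjoint (Iic (⟨t, by omega⟩ : Fin N)) (Ici (⟨N - s, by omega⟩ : Fin N)) := by
    rw [Finset.disjoint_left]
    intro i hi1 hi2
    simp only [mem_Iic, mem_Ici, Fin.le_def, Fin.val_mk] at hi1 hi2
    omega
  rw [hK, card_union_of_disjoint hdisj, Fin.card_Iic, Fin.card_Ici]
  simp only [Fin.val_mk]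
  omega

lemma sum_geo (N : ℕ) (hN : 3 ≤ N) :
    ∑ m ∈ Finset.Icc 2 (N - 1), 2 ^ (N - (m + 1)) = 2 ^ (N - 2) - 1 := by
  have h : ∑ m ∈ Finset.Icc 2 (N - 1), 2 ^ (N - (m + 1))
      = ∑ k ∈ Finset.range (N - 2), 2 ^ k := by
    apply Finset.sum_nbij' (i := fun m => N - 1 - m) (j := fun k => N - 1 - k)
    · intro a ha
      simp only [mem_Icc] at ha
      simp only [mem_range]
      omega
    · intro a ha
      simp only [mem_range] at ha
      simp only [mem_Icc]
      omega
    · intro a ha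
      simp only [mem_Icc] at ha
      omega
    · intro a ha
      simp only [mem_range] at ha
      omega
    · intro a ha
      simp only [mem_Icc] at ha
      congr 1
      omega
  rw [h, sum_range_two_pow]

end RhythmAux

open RhythmAux Finset in
open Rhythm in
/-- For every `N ≥ 3`, the Boolean function `Bav_N^0 : F_2^N → F_2` is balanced: the number
of `v ∈ F_2^N` with `Bav_N^0(v) = 1` equals `2^{N−1}`, and so does the number of `v` with
`Bav_N^0(v) = 0`. -/
theorem Bav_zero_balanced (N : ℕ) (hN : 3 ≤ N) :
    (Finset.univ.filter fun v : Fin N → ZMod 2 => Bav N v ⟨0, by omega⟩ = 1).card =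
      2 ^ (N - 1) ∧
    (Finset.univ.filter fun v : Fin N → ZMod 2 => Bav N v ⟨0, by omega⟩ = 0).card =
      2 ^ (N - 1) := by
  classical
  obtain ⟨F, hF0eq, hF1eq, hFmeq⟩ :
      ∃ F : ℕ → Finset (Fin N → ZMod 2),
        (F 0 = univ.filter (fun v => ∀ i : Fin N, i.val ≤ 1 → v i = 1)) ∧
        (F 1 = univ.filter (fun v : Fin N → ZMod 2 =>
          ∀ i : Fin N, v i = if i.val = 0 then 1 else 0)) ∧
        (∀ m, 2 ≤ m → F m = univ.filter (fun v : Fin N → ZMod 2 =>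
          (∀ i : Fin N, i.val = (m - m / 2) ∨ i.val = N - m / 2 → v i = 1) ∧
          (∀ i : Fin N, i.val < (m - m / 2) ∨ N - m / 2 < i.val → v i = 0))) := by
    refine ⟨fun m =>
      if m = 0 then univ.filter (fun v => ∀ i : Fin N, i.val ≤ 1 → v i = 1)
      else if m = 1 then univ.filter (fun v => ∀ i : Fin N, v i = if i.val = 0 then 1 else 0)
      else univ.filter (fun v =>
        (∀ i : Fin N, i.val = (m - m / 2) ∨ i.val = N - m / 2 → v i = 1) ∧
        (∀ i : Fin N, i.val < (m - m / 2) ∨ N - m / 2 < i.val → v i = 0)), ?_, ?_, ?_⟩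
    · norm_num
    · norm_num
    · intro m hm
      dsimp only
      rw [if_neg (by omega), if_neg (by omega)]
  -- description of the members of each piece (what we need for disjointness)
  have hF0 : ∀ v ∈ F 0, v ⟨0, by omega⟩ = 1 ∧ v ⟨1, by omega⟩ = 1 := by
    intro v hv
    rw [hF0eq, mem_filter] at hv
    exact ⟨hv.2 ⟨0, by omega⟩ (by simp), hv.2 ⟨1, by omega⟩ (by simp)⟩
  have hF1 : ∀ v ∈ F 1, v ⟨0, by omega⟩ = 1 ∧ v ⟨1, by omega⟩ = 0 := by
    intro v hv
    rw [hF1eq, mem_filter] at hv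
    have h0 := hv.2 ⟨0, by omega⟩
    have h1 := hv.2 ⟨1, by omega⟩
    simp only [Fin.val_mk] at h0 h1
    norm_num at h0 h1
    exact ⟨h0, h1⟩
  have hFm : ∀ m, 2 ≤ m → m ≤ N - 1 → ∀ v ∈ F m,
      (∀ i : Fin N, i.val = (m - m / 2) ∨ i.val = N - m / 2 → v i = 1) ∧
      (∀ i : Fin N, i.val < (m - m / 2) ∨ N - m / 2 < i.val → v i = 0) := by
    intro m hm2 hmN v hv
    rw [hFmeq m hm2, mem_filter] at hv
    exact hv.2
  -- pairwise disjointness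
  have key : ∀ m ∈ range N, ∀ m' ∈ range N, m ≠ m' → Disjoint (F m) (F m') := by
    have main : ∀ m m', m < m' → m' < N → ∀ v, v ∈ F m → v ∈ F m' → False := by
      intro m m' hlt hm'N v hvm hvm'
      rcases Nat.eq_or_lt_of_le (Nat.zero_le m) with hm0 | hm0
      · -- m = 0
        have h0 := hF0 v (by rw [← hm0] at hvm; exact hvm)
        rcases Nat.eq_or_lt_of_le (show 1 ≤ m' by omega) with hm1 | hm1
        · have h1 := hF1 v (by rw [← hm1] at hvm'; exact hvm')
          rw [h0.2] at h1
          exact one_ne_zero h1.2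
        · have h2 := (hFm m' (by omega) (by omega) v hvm').2 ⟨0, by omega⟩
            (by simp only [Fin.val_mk]; omega)
          rw [h0.1] at h2
          exact one_ne_zero h2
      · rcases Nat.eq_or_lt_of_le hm0 with hm1 | hm1
        · -- m = 1
          have h1 := hF1 v (by rw [← hm1] at hvm; exact hvm)
          have h2 := (hFm m' (by omega) (by omega) v hvm').2 ⟨0, by omega⟩
            (by simp only [Fin.val_mk]; omega)
          rw [h1.1] at h2
          exact one_ne_zero h2
        · -- 2 ≤ m < m'
          have hA := hFm m (by omega) (by omega) v hvm
          have hB := hFm m' (by omega) (by omega) v hvm'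
          rcases Nat.lt_or_ge (m - m / 2) (m' - m' / 2) with ht | ht
          · have hx := hA.1 ⟨m - m / 2, by omega⟩ (Or.inl (by simp only [Fin.val_mk]))
            have hy := hB.2 ⟨m - m / 2, by omega⟩ (by simp only [Fin.val_mk]; omega)
            rw [hx] at hy
            exact one_ne_zero hy
          · have hss : m / 2 < m' / 2 := by omega
            have hx := hA.1 ⟨N - m / 2, by omega⟩ (Or.inr (by simp only [Fin.val_mk]))
            have hy := hB.2 ⟨N - m / 2, by omega⟩ (by simp only [Fin.val_mk]; omega)
            rw [hx] at hy
            exact one_ne_zero hy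
    intro m hm m' hm' hne
    simp only [mem_range] at hm hm'
    rw [Finset.disjoint_left]
    intro v hv hv'
    rcases Nat.lt_or_ge m m' with h | h
    · exact main m m' h hm' v hv hv'
    · exact main m' m (by omega) hm v hv' hv
  -- the partition
  have hset : (univ.filter fun v : Fin N → ZMod 2 => Bav N v ⟨0, by omega⟩ = 1)
      = (range N).biUnion F := by
    ext v
    simp only [mem_filter, mem_univ, true_and, mem_biUnion, mem_range]
    rw [bav_char N hN v]
    constructor
    · rintro (h | h | ⟨s, t, hs, hst, hts, hstN, hone, hzer⟩)
      · refine ⟨0, by omega, ?_⟩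
        rw [hF0eq, mem_filter]
        exact ⟨mem_univ v, h⟩
      · refine ⟨1, by omega, ?_⟩
        rw [hF1eq, mem_filter]
        exact ⟨mem_univ v, h⟩
      · refine ⟨s + t, by omega, ?_⟩
        rw [hFmeq (s + t) (by omega), mem_filter]
        have hd : (s + t) / 2 = s := by omega
        have hd2 : s + t - s = t := by omega
        rw [hd, hd2]
        exact ⟨mem_univ v, hone, hzer⟩
    · rintro ⟨m, hm, hv⟩
      rcases Nat.eq_or_lt_of_le (Nat.zero_le m) with hm0 | hm0
      · left
        rw [← hm0, hF0eq, mem_filter] at hv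
        exact hv.2
      · rcases Nat.eq_or_lt_of_le hm0 with hm1 | hm1
        · right; left
          rw [← hm1, hF1eq, mem_filter] at hv
          exact hv.2
        · right; right
          have hA := hFm m (by omega) (by omega) v hv
          exact ⟨m / 2, m - m / 2, by omega, by omega, by omega, by omega, hA.1, hA.2⟩
  -- cards of the pieces
  have hcard0 : (F 0).card = 2 ^ (N - 2) := by
    rw [hF0eq]
    exact card_Q0 N hN
  have hcard1 : (F 1).card = 1 := by
    rw [hF1eq]
    exact card_Q1 N hN
  have hcardm : ∀ m, 2 ≤ m → m ≤ N - 1 → (F m).card = 2 ^ (N - (m + 1)) := by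
    intro m hm2 hmN
    have hh1 : 1 ≤ m / 2 := by omega
    have hh2 : m / 2 ≤ m - m / 2 := by omega
    have hh3 : m / 2 + (m - m / 2) + 1 ≤ N := by omega
    have h := card_Qst N (m / 2) (m - m / 2) hh1 hh2 hh3
    rw [hFmeq m hm2, h]
    have he : N - (m / 2 + (m - m / 2) + 1) = N - (m + 1) := by
      clear hset key hF0 hF1 hFm hF0eq hF1eq hFmeq h
      omega
    rw [he]
  -- add it all up
  have hmain : (univ.filter fun v : Fin N → ZMod 2 => Bav N v ⟨0, by omega⟩ = 1).card
      = 2 ^ (N - 1) := by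
    rw [hset, card_biUnion key]
    rw [show range N = insert 0 (insert 1 (Finset.Icc 2 (N - 1))) from by
      ext x; simp only [mem_range, mem_insert, mem_Icc]; omega]
    rw [Finset.sum_insert (by simp only [mem_insert, mem_Icc]; omega),
      Finset.sum_insert (by simp only [mem_Icc]; omega)]
    rw [hcard0, hcard1]
    rw [Finset.sum_congr rfl (fun m hm => by
      simp only [mem_Icc] at hm
      exact hcardm m hm.1 hm.2)]
    rw [sum_geo N hN]
    have h1 : 1 ≤ 2 ^ (N - 2) := Nat.one_le_two_pow
    have h2 : 2 ^ (N - 1) = 2 ^ (N - 2) * 2 := by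
      rw [← pow_succ]
      congr 1
      omega
    omega
  refine ⟨hmain, ?_⟩
  have htot := Finset.card_filter_add_card_filter_not
    (s := (univ : Finset (Fin N → ZMod 2)))
    (p := fun v => Bav N v ⟨0, by omega⟩ = 1)
  have hneg : (univ.filter fun v : Fin N → ZMod 2 => ¬ Bav N v ⟨0, by omega⟩ = 1)
      = (univ.filter fun v : Fin N → ZMod 2 => Bav N v ⟨0, by omega⟩ = 0) := by
    apply filter_congr
    intro v _
    exact zmod2_ne_one _
  rw [hneg, hmain] at htot
  have huniv : (univ : Finset (Fin N → ZMod 2)).card = 2 ^ N := by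
    rw [card_univ, Fintype.card_fun, Fintype.card_fin,
      show Fintype.card (ZMod 2) = 2 from rfl]
  rw [huniv] at htot
  have h2 : 2 ^ N = 2 ^ (N - 1) * 2 := by
    rw [← pow_succ]
    congr 1
    omega
  omega
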